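/- If T is a tree of order n ≥ 2, then the 2-coalition number satisfies C_2(T) ≤ ⌊n/2⌋ + 1. -/

import Mathlib

open SimpleGraph

/-- A set `S` is a `k`-dominating set of `G` if every vertex outside `S`
has at least `k` neighbors in `S`. -/
def KDominatingSet {V : Type*} (G : SimpleGraph V) (k : ℕ) (S : Set V) : Prop :=
  ∀ v ∉ S, k ≤ (S ∩ G.neighborSet v).ncard

/-- Two disjoint sets `A` and `B` form a `k`-coalition in `G` if neither is a
`k`-dominating set of `G` but their union is. -/
def KCoalition {V : Type*} (G : SimpleGraph V) (k : ℕ) (A B : Set V) : Prop :=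
  Disjoint A B ∧ ¬ KDominatingSet G k A ∧ ¬ KDominatingSet G k B ∧
    KDominatingSet G k (A ∪ B)

/-- A `k`-coalition partition of `G` is a partition of the vertex set in which every
part is either a `k`-dominating set of cardinality `k` or forms a `k`-coalition with
another part. -/
def KCoalitionPartition {V : Type*} (G : SimpleGraph V) (k : ℕ) (P : Finset (Set V)) : Prop :=
  (∀ A ∈ P, A.Nonempty) ∧
  (P : Set (Set V)).PairwiseDisjoint id ∧
  (⋃ A ∈ P, A) = (Set.univ : Set V) ∧
  ∀ A ∈ P, (KDominatingSet G k A ∧ A.ncard = k) ∨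
    ∃ B ∈ P, B ≠ A ∧ KCoalition G k A B

/-- The `k`-coalition number of `G`: the maximum cardinality of a
`k`-coalition partition of `G`. -/
noncomputable def kCoalitionNumber {V : Type*} (G : SimpleGraph V) (k : ℕ) : ℕ :=
  sSup {n | ∃ P : Finset (Set V), KCoalitionPartition G k P ∧ P.card = n}

open Finset

lemma aux_ncard_deg {V : Type*} [Fintype V] (T : SimpleGraph V) [DecidableRel T.Adj] (v : V) :
    (T.neighborSet v).ncard = T.degree v := by
  rw [← Nat.card_coe_set_eq, Nat.card_eq_fintype_card, card_neighborSet_eq_degree]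

lemma aux_two_leaves {V : Type*} [Fintype V] (T : SimpleGraph V) (hT : T.IsTree)
    (hn : 2 ≤ Fintype.card V) :
    ∃ v w : V, v ≠ w ∧ (T.neighborSet v).ncard ≤ 1 ∧ (T.neighborSet w).ncard ≤ 1 := by
  classical
  have hdegpos : ∀ v : V, 0 < T.degree v := by
    intro v
    obtain ⟨w, hw⟩ := Fintype.exists_ne_of_one_lt_card (by omega) v
    obtain ⟨p⟩ := hT.isConnected.preconnected v w
    rw [degree_pos_iff_exists_adj]
    obtain ⟨u, h, q, rfl⟩ := SimpleGraph.Walk.not_nil_iff.mp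
      (SimpleGraph.Walk.not_nil_of_ne (Ne.symm hw) (p := p))
    exact ⟨u, h⟩
  have hsum : ∑ v, T.degree v = 2 * (Fintype.card V - 1) := by
    rw [T.sum_degrees_eq_twice_card_edges, hT.card_edgeFinset.symm]
    omega
  have hcard : 2 ≤ (Finset.univ.filter (fun v => T.degree v ≤ 1)).card := by
    by_contra hlt
    have hub : ∑ v, (if T.degree v ≤ 1 then 1 else 2) ≤ ∑ v, T.degree v := by
      apply Finset.sum_le_sum
      intro i _
      by_cases h : T.degree i ≤ 1
      · simp only [h, if_true]; exact hdegpos i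
      · simp only [h, if_false]; omega
    rw [Finset.sum_ite, Finset.sum_const, Finset.sum_const] at hub
    have hsplit := Finset.card_filter_add_card_filter_not
      (s := (Finset.univ : Finset V)) (p := fun v => T.degree v ≤ 1)
    simp only [Finset.card_univ] at hsplit
    rw [hsum] at hub
    simp only [smul_eq_mul, mul_one] at hub
    omega
  obtain ⟨a, ha, b, hb, hab⟩ := Finset.one_lt_card.mp hcard
  simp only [Finset.mem_filter] at ha hb
  exact ⟨a, b, hab, by rw [aux_ncard_deg]; exact ha.2, by rw [aux_ncard_deg]; exact hb.2⟩

lemma aux_mem_dom {V : Type*} [Fintype V] (T : SimpleGraph V) {v : V} {S : Set V}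
    (hv : (T.neighborSet v).ncard ≤ 1) (hS : KDominatingSet T 2 S) : v ∈ S := by
  by_contra hvS
  have h2 := hS v hvS
  have := Set.ncard_le_ncard (Set.inter_subset_right (s := S) (t := T.neighborSet v))
    (Set.toFinite _)
  omega
lemma aux_ncard_filter {V : Type*} [Fintype V] (s : Set V)
    [DecidablePred (· ∈ s)] : s.ncard = (Finset.univ.filter (· ∈ s)).card := by
  classical
  rw [← Nat.card_coe_set_eq, Nat.card_eq_fintype_card]
  simp [Fintype.card_subtype]

lemma aux_arith (F t a S n : ℕ) (ht : 3 ≤ t) (ha : 1 ≤ a) (hn : a + S = n)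
    (h1 : 2*t*n ≤ F + 2*(t*a) + 2*S) (h2 : 2*F ≤ (t-1)*(2*(n-1))) : 2*S + 1 ≤ n := by
  obtain ⟨r, hr2, rfl⟩ : ∃ r, 2 ≤ r ∧ t = r + 1 := ⟨t - 1, by omega, by omega⟩
  obtain ⟨b, rfl⟩ : ∃ b, a = b + 1 := ⟨a - 1, by omega⟩
  subst hn
  have e0 : (r + 1) - 1 = r := by omega
  have e0' : (b + 1 + S) - 1 = b + S := by omega
  rw [e0, e0'] at h2
  have e1 : 2*(r*S) ≤ F := by nlinarith
  have e3 : (2*r)*(2*S) ≤ (2*r)*(b+S) := by nlinarith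
  have := Nat.le_of_mul_le_mul_left e3 (by omega)
  omega

lemma aux_sum_ncard {V : Type*} [Fintype V] (P : Finset (Set V))
    (hdisj : (P : Set (Set V)).PairwiseDisjoint id)
    (hcov : (⋃ A ∈ P, A) = (Set.univ : Set V)) :
    ∑ C ∈ P, C.ncard = Fintype.card V := by
  classical
  calc ∑ C ∈ P, C.ncard = ∑ C ∈ P, (Finset.univ.filter (· ∈ C)).card :=
        Finset.sum_congr rfl fun C _ => aux_ncard_filter C
    _ = (P.biUnion (fun C => Finset.univ.filter (· ∈ C))).card := by
        rw [Finset.card_biUnion]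
        intro C hC D hD hne
        rw [Function.onFun, Finset.disjoint_left]
        intro z hz hz'
        simp only [Finset.mem_filter] at hz hz'
        exact Set.disjoint_left.mp (hdisj hC hD hne) hz.2 hz'.2
    _ = Fintype.card V := by
        rw [← Finset.card_univ]
        congr 1
        ext z
        simp only [Finset.mem_biUnion, Finset.mem_filter, Finset.mem_univ, true_and, iff_true]
        have : z ∈ (⋃ A ∈ P, A) := by rw [hcov]; trivial
        simpa using this

lemma aux_count {V : Type*} [Fintype V] [DecidableEq (Set V)] (T : SimpleGraph V) (hT : T.IsTree)
    (P : Finset (Set V)) (hne : ∀ A ∈ P, A.Nonempty)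
    (hdisj : (P : Set (Set V)).PairwiseDisjoint id)
    (hcov : (⋃ A ∈ P, A) = (Set.univ : Set V))
    (A : Set V) (hA : A ∈ P)
    (hdom : ∀ B ∈ P.erase A, KDominatingSet T 2 (A ∪ B))
    (ht : 3 ≤ (P.erase A).card) :
    2 * (∑ B ∈ P.erase A, B.ncard) + 1 ≤ Fintype.card V := by
  classical
  set n := Fintype.card V with hn
  set Q := P.erase A with hQ
  set t := Q.card with htdef
  -- basic membership facts
  have hmemP : ∀ B ∈ Q, B ∈ P ∧ B ≠ A := fun B hB =>
    ⟨Finset.mem_of_mem_erase hB, Finset.ne_of_mem_erase hB⟩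
  have huniq : ∀ (z : V) (C D : Set V), C ∈ P → D ∈ P → z ∈ C → z ∈ D → C = D := by
    intro z C D hC hD hzC hzD
    by_contra hCD
    exact Set.disjoint_left.mp (hdisj hC hD hCD) hzC hzD
  have hpart : ∀ z : V, z ∉ A → ∃ B ∈ Q, z ∈ B := by
    intro z hz
    have : z ∈ (⋃ C ∈ P, C) := by rw [hcov]; trivial
    simp only [Set.mem_iUnion] at this
    obtain ⟨C, hC, hzC⟩ := this
    exact ⟨C, Finset.mem_erase.mpr ⟨fun he => hz (he ▸ hzC), hC⟩, hzC⟩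
  have hABdisj : ∀ B ∈ Q, Disjoint A B := fun B hB =>
    hdisj hA (hmemP B hB).1 (Ne.symm (hmemP B hB).2)
  -- the double count
  set h : V → V → ℕ := fun x y =>
    (Q.filter (fun B => x ∉ A ∪ B ∧ y ∈ A ∪ B ∧ T.Adj x y)).card with hh
  set F : ℕ := ∑ B ∈ Q, ∑ x : V, ∑ y : V,
    (if x ∉ A ∪ B ∧ y ∈ A ∪ B ∧ T.Adj x y then 1 else 0) with hF
  -- lower bound
  have hlow : ∀ B ∈ Q, 2 * n ≤ (∑ x : V, ∑ y : V,
      (if x ∉ A ∪ B ∧ y ∈ A ∪ B ∧ T.Adj x y then 1 else 0)) + 2 * (A ∪ B).ncard := by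
    intro B hB
    have hcardin : (A ∪ B).ncard = (Finset.univ.filter (· ∈ A ∪ B)).card :=
      aux_ncard_filter _
    have hcardout : (Finset.univ.filter (fun x => x ∉ A ∪ B)).card + (A ∪ B).ncard = n := by
      rw [hcardin, hn, ← Finset.card_univ]
      have := Finset.card_filter_add_card_filter_not
        (s := (Finset.univ : Finset V)) (p := fun x => x ∈ A ∪ B)
      omega
    have hstep : ∀ x ∈ Finset.univ.filter (fun x => x ∉ A ∪ B),
        2 ≤ ∑ y : V, (if x ∉ A ∪ B ∧ y ∈ A ∪ B ∧ T.Adj x y then 1 else 0) := by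
      intro x hx
      rw [Finset.mem_filter] at hx
      have hxo := hx.2
      have hd := hdom B hB x hxo
      have : ((A ∪ B) ∩ T.neighborSet x).ncard
          = ∑ y : V, (if x ∉ A ∪ B ∧ y ∈ A ∪ B ∧ T.Adj x y then 1 else 0) := by
        rw [aux_ncard_filter, Finset.card_filter]
        apply Finset.sum_congr rfl
        intro y _
        congr 1
        simp only [Set.mem_inter_iff, mem_neighborSet, eq_iff_iff]
        tauto
      omega
    have h1 : ∑ x ∈ Finset.univ.filter (fun x => x ∉ A ∪ B), (2:ℕ)
        ≤ ∑ x ∈ Finset.univ.filter (fun x => x ∉ A ∪ B),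
          ∑ y : V, (if x ∉ A ∪ B ∧ y ∈ A ∪ B ∧ T.Adj x y then 1 else 0) :=
      Finset.sum_le_sum hstep
    have h2 : ∑ x ∈ Finset.univ.filter (fun x => x ∉ A ∪ B),
          (∑ y : V, (if x ∉ A ∪ B ∧ y ∈ A ∪ B ∧ T.Adj x y then 1 else 0))
        ≤ ∑ x : V, ∑ y : V, (if x ∉ A ∪ B ∧ y ∈ A ∪ B ∧ T.Adj x y then 1 else 0) :=
      Finset.sum_le_sum_of_subset (Finset.filter_subset _ _)
    rw [Finset.sum_const, smul_eq_mul] at h1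
    omega

  -- summed lower bound
  have hsumlow : 2 * t * n ≤ F + 2 * (t * A.ncard) + 2 * (∑ B ∈ Q, B.ncard) := by
    have hunion : ∀ B ∈ Q, (A ∪ B).ncard = A.ncard + B.ncard := by
      intro B hB
      exact Set.ncard_union_eq (hABdisj B hB) (Set.toFinite _) (Set.toFinite _)
    have := Finset.sum_le_sum hlow
    rw [Finset.sum_const, smul_eq_mul] at this
    have hrhs : ∑ B ∈ Q, (2 * (A ∪ B).ncard)
        = 2 * (t * A.ncard) + 2 * (∑ B ∈ Q, B.ncard) := by
      rw [Finset.sum_congr rfl (fun B hB => by rw [hunion B hB]), ← Finset.mul_sum,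
        Finset.sum_add_distrib, Finset.sum_const, smul_eq_mul, htdef]
      ring
    rw [Finset.sum_add_distrib, ← hF, hrhs] at this
    have e : 2 * t * n = t * (2 * n) := by ring
    linarith
  -- rewrite F as sum over pairs
  have hFh : F = ∑ x : V, ∑ y : V, h x y := by
    rw [hF, Finset.sum_comm]
    refine Finset.sum_congr rfl fun x _ => ?_
    rw [Finset.sum_comm]
    refine Finset.sum_congr rfl fun y _ => ?_
    simp only [hh]
    exact (Finset.card_filter _ _).symm
  -- the pair bound
  have hpair : ∀ x y : V, h x y + h y x ≤ if T.Adj x y then t - 1 else 0 := by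
    intro x y
    by_cases hadj : T.Adj x y
    · rw [if_pos hadj]
      by_cases hx : x ∈ A <;> by_cases hy : y ∈ A
      · have h1 : h x y = 0 := by
          simp only [hh]; simp only [Finset.card_eq_zero]
          apply Finset.filter_eq_empty_iff.mpr
          intro B _; exact fun hc => hc.1 (Or.inl hx)
        have h2 : h y x = 0 := by
          simp only [hh]; simp only [Finset.card_eq_zero]
          apply Finset.filter_eq_empty_iff.mpr
          intro B _; exact fun hc => hc.1 (Or.inl hy)
        omega
      · -- x ∈ A, y ∉ A
        obtain ⟨By, hBy, hyBy⟩ := hpart y hy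
        have h1 : h x y = 0 := by
          simp only [hh]; simp only [Finset.card_eq_zero]
          apply Finset.filter_eq_empty_iff.mpr
          intro B _; exact fun hc => hc.1 (Or.inl hx)
        have h2 : h y x = t - 1 := by
          simp only [hh]
          have : Q.filter (fun B => y ∉ A ∪ B ∧ x ∈ A ∪ B ∧ T.Adj y x) = Q.erase By := by
            ext B
            simp only [Finset.mem_filter, Finset.mem_erase]
            constructor
            · rintro ⟨hBQ, hyB, -, -⟩
              exact ⟨fun he => hyB (he ▸ Or.inr hyBy), hBQ⟩
            · rintro ⟨hne2, hBQ⟩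
              refine ⟨hBQ, ?_, Or.inl hx, hadj.symm⟩
              rintro (hyA | hyB)
              · exact hy hyA
              · exact hne2 (huniq y B By (hmemP B hBQ).1 (hmemP By hBy).1 hyB hyBy)
          rw [this, Finset.card_erase_of_mem hBy, htdef]
        omega
      · -- x ∉ A, y ∈ A
        obtain ⟨Bx, hBx, hxBx⟩ := hpart x hx
        have h2 : h y x = 0 := by
          simp only [hh]; simp only [Finset.card_eq_zero]
          apply Finset.filter_eq_empty_iff.mpr
          intro B _; exact fun hc => hc.1 (Or.inl hy)
        have h1 : h x y = t - 1 := by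
          simp only [hh]
          have : Q.filter (fun B => x ∉ A ∪ B ∧ y ∈ A ∪ B ∧ T.Adj x y) = Q.erase Bx := by
            ext B
            simp only [Finset.mem_filter, Finset.mem_erase]
            constructor
            · rintro ⟨hBQ, hxB, -, -⟩
              exact ⟨fun he => hxB (he ▸ Or.inr hxBx), hBQ⟩
            · rintro ⟨hne2, hBQ⟩
              refine ⟨hBQ, ?_, Or.inl hy, hadj⟩
              rintro (hxA | hxB)
              · exact hx hxA
              · exact hne2 (huniq x B Bx (hmemP B hBQ).1 (hmemP Bx hBx).1 hxB hxBx)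
          rw [this, Finset.card_erase_of_mem hBx, htdef]
        omega
      · -- both outside A
        obtain ⟨Bx, hBx, hxBx⟩ := hpart x hx
        obtain ⟨By, hBy, hyBy⟩ := hpart y hy
        by_cases hBe : Bx = By
        · have h1 : h x y = 0 := by
            simp only [hh]; simp only [Finset.card_eq_zero]
            apply Finset.filter_eq_empty_iff.mpr
            intro B hBQ
            rintro ⟨hxB, hyB, -⟩
            rcases hyB with hyA | hyB
            · exact hy hyA
            · have : B = By := huniq y B By (hmemP B hBQ).1 (hmemP By hBy).1 hyB hyBy
              exact hxB (Or.inr (by rw [this, ← hBe]; exact hxBx))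
          have h2 : h y x = 0 := by
            simp only [hh]; simp only [Finset.card_eq_zero]
            apply Finset.filter_eq_empty_iff.mpr
            intro B hBQ
            rintro ⟨hyB, hxB, -⟩
            rcases hxB with hxA | hxB
            · exact hx hxA
            · have : B = Bx := huniq x B Bx (hmemP B hBQ).1 (hmemP Bx hBx).1 hxB hxBx
              exact hyB (Or.inr (by rw [this, hBe]; exact hyBy))
          omega
        · have h1 : h x y ≤ 1 := by
            simp only [hh]
            calc (Q.filter (fun B => x ∉ A ∪ B ∧ y ∈ A ∪ B ∧ T.Adj x y)).card
                ≤ ({By} : Finset (Set V)).card := by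
                  apply Finset.card_le_card
                  intro B hB
                  rw [Finset.mem_filter] at hB
                  obtain ⟨hBQ, -, hyB, -⟩ := hB
                  rcases hyB with hyA | hyB
                  · exact absurd hyA hy
                  · simp only [Finset.mem_singleton]
                    exact huniq y B By (hmemP B hBQ).1 (hmemP By hBy).1 hyB hyBy
              _ = 1 := Finset.card_singleton _
          have h2 : h y x ≤ 1 := by
            simp only [hh]
            calc (Q.filter (fun B => y ∉ A ∪ B ∧ x ∈ A ∪ B ∧ T.Adj y x)).card
                ≤ ({Bx} : Finset (Set V)).card := by
                  apply Finset.card_le_card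
                  intro B hB
                  rw [Finset.mem_filter] at hB
                  obtain ⟨hBQ, -, hxB, -⟩ := hB
                  rcases hxB with hxA | hxB
                  · exact absurd hxA hx
                  · simp only [Finset.mem_singleton]
                    exact huniq x B Bx (hmemP B hBQ).1 (hmemP Bx hBx).1 hxB hxBx
              _ = 1 := Finset.card_singleton _
          omega
    · rw [if_neg hadj]
      have hadj' : ¬ T.Adj y x := fun hc => hadj hc.symm
      have h1 : h x y = 0 := by
        simp only [hh]; simp only [Finset.card_eq_zero]
        apply Finset.filter_eq_empty_iff.mpr
        intro B _; exact fun hc => hadj hc.2.2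
      have h2 : h y x = 0 := by
        simp only [hh]; simp only [Finset.card_eq_zero]
        apply Finset.filter_eq_empty_iff.mpr
        intro B _; exact fun hc => hadj' hc.2.2
      omega
  -- degree sum
  have hdegsum : ∑ x : V, ∑ y : V, (if T.Adj x y then 1 else 0) = 2 * (n - 1) := by
    have hd : ∀ x : V, ∑ y : V, (if T.Adj x y then 1 else 0) = T.degree x := by
      intro x
      rw [← Finset.card_filter]
      rw [← neighborFinset_eq_filter]
      rfl
    rw [Finset.sum_congr rfl (fun x _ => hd x), T.sum_degrees_eq_twice_card_edges]
    have := hT.card_edgeFinset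
    omega
  -- upper bound
  have hupp : 2 * F ≤ (t - 1) * (2 * (n - 1)) := by
    have h2F : 2 * F = ∑ x : V, ∑ y : V, (h x y + h y x) := by
      rw [hFh, two_mul]
      have : ∑ x : V, ∑ y : V, h y x = ∑ x : V, ∑ y : V, h x y := Finset.sum_comm
      rw [Finset.sum_congr rfl (fun x _ => Finset.sum_add_distrib)]
      rw [Finset.sum_add_distrib, this]
    rw [h2F]
    calc ∑ x : V, ∑ y : V, (h x y + h y x)
        ≤ ∑ x : V, ∑ y : V, (if T.Adj x y then t - 1 else 0) :=
          Finset.sum_le_sum fun x _ => Finset.sum_le_sum fun y _ => hpair x y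
      _ = (t - 1) * (2 * (n - 1)) := by
          rw [← hdegsum, Finset.mul_sum]
          refine Finset.sum_congr rfl fun x _ => ?_
          rw [Finset.mul_sum]
          refine Finset.sum_congr rfl fun y _ => ?_
          by_cases hxy : T.Adj x y <;> simp [hxy]
  -- conclude
  have hApos : 1 ≤ A.ncard := (Set.ncard_pos (Set.toFinite _)).mpr (hne A hA)
  have hsplit : A.ncard + (∑ B ∈ Q, B.ncard) = n := by
    rw [hn, ← aux_sum_ncard P hdisj hcov, add_comm]
    exact Finset.sum_erase_add P _ hA
  exact aux_arith F t A.ncard (∑ B ∈ Q, B.ncard) n ht hApos hsplit hsumlow hupp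

lemma aux_main {V : Type*} [Fintype V] (T : SimpleGraph V) (hT : T.IsTree)
    (hn : 2 ≤ Fintype.card V) (P : Finset (Set V)) (hP : KCoalitionPartition T 2 P) :
    P.card ≤ Fintype.card V / 2 + 1 := by
  classical
  obtain ⟨hne, hdisj, hcov, hprop⟩ := hP
  obtain ⟨v, w, hvw, hv1, hw1⟩ := aux_two_leaves T hT hn
  have hvdom : ∀ S : Set V, KDominatingSet T 2 S → v ∈ S := fun S hS => aux_mem_dom T hv1 hS
  have hwdom : ∀ S : Set V, KDominatingSet T 2 S → w ∈ S := fun S hS => aux_mem_dom T hw1 hS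
  have huniq : ∀ (z : V) (C D : Set V), C ∈ P → D ∈ P → z ∈ C → z ∈ D → C = D := by
    intro z C D hC hD hzC hzD
    by_contra hCD
    exact Set.disjoint_left.mp (hdisj hC hD hCD) hzC hzD
  have hfind : ∀ z : V, ∃ C ∈ P, z ∈ C := by
    intro z
    have : z ∈ (⋃ C ∈ P, C) := by rw [hcov]; trivial
    simpa using this
  obtain ⟨A, hA, hvA⟩ := hfind v
  obtain ⟨A', hA', hwA'⟩ := hfind w
  by_cases hAA : A = A'
  · subst hAA
    -- both small-degree vertices are in A
    have hdomQ : ∀ B ∈ P.erase A, KDominatingSet T 2 (A ∪ B) := by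
      intro B hB
      have hBP := Finset.mem_of_mem_erase hB
      have hBA := Finset.ne_of_mem_erase hB
      rcases hprop B hBP with ⟨hd, -⟩ | ⟨D, hD, hDB, hco⟩
      · exact absurd (huniq v A B hA hBP hvA (hvdom B hd)) (Ne.symm hBA)
      · obtain ⟨-, -, -, hdBD⟩ := hco
        rcases hvdom _ hdBD with hvB | hvD
        · exact absurd (huniq v A B hA hBP hvA hvB) (Ne.symm hBA)
        · have : D = A := huniq v D A hD hA hvD hvA
          rw [this, Set.union_comm] at hdBD
          exact hdBD
    set Q := P.erase A with hQ
    set t := Q.card with ht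
    have hcardP : P.card = t + 1 := by
      rw [ht, hQ, Finset.card_erase_of_mem hA]
      have := Finset.card_pos.mpr ⟨A, hA⟩
      omega
    have htS : t ≤ ∑ B ∈ Q, B.ncard := by
      rw [ht, Finset.card_eq_sum_ones]
      exact Finset.sum_le_sum fun B hB =>
        (Set.ncard_pos (Set.toFinite _)).mpr (hne B (Finset.mem_of_mem_erase hB))
    have hsplit : A.ncard + (∑ B ∈ Q, B.ncard) = Fintype.card V := by
      rw [← aux_sum_ncard P hdisj hcov, add_comm]
      exact Finset.sum_erase_add P _ hA
    rcases le_or_gt 3 t with h3 | h3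
    · have hcount := aux_count T hT P hne hdisj hcov A hA hdomQ h3
      rw [← hQ] at hcount
      omega
    · have hA2 : 2 ≤ A.ncard := by
        have : 1 < A.ncard := (Set.one_lt_ncard (Set.toFinite _)).mpr ⟨v, hvA, w, hwA', hvw⟩
        omega
      omega
  · -- the two forced vertices lie in different parts
    have hsub : P ⊆ ({A, A'} : Finset (Set V)) := by
      intro C hC
      simp only [Finset.mem_insert, Finset.mem_singleton]
      rcases hprop C hC with ⟨hd, -⟩ | ⟨D, hD, hDC, hco⟩
      · exact Or.inl ((huniq v A C hA hC hvA (hvdom C hd)).symm)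
      · obtain ⟨-, -, -, hdCD⟩ := hco
        rcases hvdom _ hdCD with hvC | hvD
        · exact Or.inl ((huniq v A C hA hC hvA hvC).symm)
        · have hDA : D = A := huniq v D A hD hA hvD hvA
          rcases hwdom _ hdCD with hwC | hwD
          · exact Or.inr ((huniq w A' C hA' hC hwA' hwC).symm)
          · exact absurd (hDA ▸ huniq w D A' hD hA' hwD hwA' : A = A') hAA
    have h2 : P.card ≤ 2 := by
      refine le_trans (Finset.card_le_card hsub) ?_
      refine le_trans (Finset.card_insert_le _ _) ?_
      simp
    omega

theorem c2_tree_le {V : Type*} [Fintype V] (T : SimpleGraph V) (hT : T.IsTree)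
    (hn : 2 ≤ Fintype.card V) :
    kCoalitionNumber T 2 ≤ Fintype.card V / 2 + 1 := by
  classical
  rw [kCoalitionNumber]
  rcases Set.eq_empty_or_nonempty
      {n | ∃ P : Finset (Set V), KCoalitionPartition T 2 P ∧ P.card = n} with he | hne
  · rw [he, csSup_empty]
    exact bot_le
  · apply csSup_le hne
    rintro m ⟨P, hP, rfl⟩
    exact aux_main T hT hn P hP
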